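/- Let M_κ be the multiplication operator by positive weights κ_λ on ℓ²(Λ), d with inf_λ d_λ > 0, α > 0. Then the map η ↦ (soft(η_λ, α d_λ)/κ_λ)_λ from ℓ²(Λ) to ℓ²(Λ) is continuous, even though the pseudoinverse M_κ⁺ (componentwise division by κ_λ) is discontinuous when inf κ_λ = 0. -/

import Mathlib

open scoped ENNReal


noncomputable def soft (η d : ℝ) : ℝ := Real.sign η * max 0 (|η| - d)

lemma soft_eq_zero {x t : ℝ} (h : |x| ≤ t) : soft x t = 0 := by
  unfold soft
  rw [max_eq_left (by linarith), mul_zero]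

lemma soft_closed_form (x t : ℝ) (ht : 0 ≤ t) :
    soft x t = max 0 (x - t) + min 0 (x + t) := by
  unfold soft
  rcases lt_trichotomy x 0 with hx | hx | hx
  · rw [Real.sign_of_neg hx, abs_of_neg hx]
    have h1 : max 0 (x - t) = 0 := max_eq_left (by linarith)
    rw [h1, zero_add]
    rcases le_total 0 (x + t) with h | h
    · rw [min_eq_left h, max_eq_left (by linarith)]; ring
    · rw [min_eq_right h, max_eq_right (by linarith)]; ring
  · subst hx
    rw [Real.sign_zero, zero_mul, zero_sub, zero_add,
      max_eq_left (by linarith), min_eq_left ht, add_zero]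
  · rw [Real.sign_of_pos hx, abs_of_pos hx, one_mul]
    have h2 : min 0 (x + t) = 0 := min_eq_left (by linarith)
    rw [h2, add_zero]

lemma abs_min_sub_min_le (c a b : ℝ) : |min c a - min c b| ≤ |a - b| := by
  have h1 := le_abs_self (a - b)
  have h2 := neg_abs_le (a - b)
  rcases le_total c a with ha | ha <;> rcases le_total c b with hb | hb
  · rw [min_eq_left ha, min_eq_left hb, sub_self]
    simp
  · rw [min_eq_left ha, min_eq_right hb]
    exact abs_le.2 ⟨by linarith, by linarith⟩
  · rw [min_eq_right ha, min_eq_left hb]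
    exact abs_le.2 ⟨by linarith, by linarith⟩
  · rw [min_eq_right ha, min_eq_right hb]

lemma soft_lipschitz (x y t : ℝ) (ht : 0 ≤ t) :
    |soft x t - soft y t| ≤ 2 * |x - y| := by
  rw [soft_closed_form x t ht, soft_closed_form y t ht]
  have h1 : |max 0 (x - t) - max 0 (y - t)| ≤ |x - y| := by
    rw [max_comm 0 (x - t), max_comm 0 (y - t)]
    calc |max (x - t) 0 - max (y - t) 0| ≤ |(x - t) - (y - t)| :=
          abs_max_sub_max_le_abs (x - t) (y - t) 0
      _ = |x - y| := by ring_nf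
  have h2 : |min 0 (x + t) - min 0 (y + t)| ≤ |x - y| := by
    calc |min 0 (x + t) - min 0 (y + t)| ≤ |(x + t) - (y + t)| :=
          abs_min_sub_min_le 0 (x + t) (y + t)
      _ = |x - y| := by ring_nf
  calc |max 0 (x - t) + min 0 (x + t) - (max 0 (y - t) + min 0 (y + t))|
      = |(max 0 (x - t) - max 0 (y - t)) + (min 0 (x + t) - min 0 (y + t))| := by ring_nf
    _ ≤ |max 0 (x - t) - max 0 (y - t)| + |min 0 (x + t) - min 0 (y + t)| := abs_add_le _ _
    _ ≤ 2 * |x - y| := by linarith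

lemma two_toReal_pow (x : ℝ) : x ^ (2 : ℝ≥0∞).toReal = x ^ 2 := by
  rw [ENNReal.toReal_ofNat]
  exact_mod_cast Real.rpow_natCast x 2

lemma finite_large_coords {Λ : Type*} (η : lp (fun _ : Λ => ℝ) 2) {b : ℝ} (hb : 0 < b) :
    {i | b ≤ |η i|}.Finite := by
  have hsum : Summable (fun i => ‖η i‖ ^ (2 : ℝ≥0∞).toReal) :=
    (lp.memℓp η).summable (by norm_num)
  have hsum' : Summable (fun i => ‖η i‖ ^ 2) := by
    simpa only [two_toReal_pow] using hsum
  have hev : ∀ᶠ i in Filter.cofinite, ‖η i‖ ^ 2 < b ^ 2 :=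
    hsum'.tendsto_cofinite_zero.eventually_lt_const (by positivity)
  refine (Filter.eventually_cofinite.mp hev).subset ?_
  intro i hi
  simp only [Set.mem_setOf_eq, Real.norm_eq_abs, not_lt] at *
  exact pow_le_pow_left₀ hb.le hi 2

set_option maxHeartbeats 1000000 in
theorem soft_div_kappa_continuous {Λ : Type*} [Countable Λ]
    (κ d : Λ → ℝ) (hκ : ∀ i, 0 < κ i) (c : ℝ) (hc : 0 < c) (hd : ∀ i, c ≤ d i)
    (α : ℝ) (hα : 0 < α) :
    ∃ T : lp (fun _ : Λ => ℝ) 2 → lp (fun _ : Λ => ℝ) 2,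
      (∀ (η : lp (fun _ : Λ => ℝ) 2) (i : Λ), T η i = soft (η i) (α * d i) / κ i) ∧
      Continuous T := by
  classical
  -- the pointwise formula
  set g : lp (fun _ : Λ => ℝ) 2 → Λ → ℝ :=
    fun η i => soft (η i) (α * d i) / κ i with hg
  -- g η vanishes off a finite set
  have hvanish : ∀ (η : lp (fun _ : Λ => ℝ) 2) i, |η i| ≤ α * c → g η i = 0 := by
    intro η i hi
    have : |η i| ≤ α * d i := hi.trans (by
      have := hd i; nlinarith)
    simp [hg, soft_eq_zero this]
  have hmem : ∀ η : lp (fun _ : Λ => ℝ) 2, Memℓp (g η) 2 := by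
    intro η
    apply memℓp_gen
    have hfin : {i | α * c ≤ |η i|}.Finite :=
      finite_large_coords η (by positivity)
    apply summable_of_ne_finset_zero (s := hfin.toFinset)
    intro i hi
    have : g η i = 0 := by
      apply hvanish
      by_contra h
      exact hi (hfin.mem_toFinset.2 (le_of_not_ge h))
    rw [this, norm_zero, Real.zero_rpow (by norm_num)]
  refine ⟨fun η => ⟨g η, hmem η⟩, fun η i => rfl, ?_⟩
  set T : lp (fun _ : Λ => ℝ) 2 → lp (fun _ : Λ => ℝ) 2 :=
    fun η => ⟨g η, hmem η⟩ with hT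
  rw [Metric.continuous_iff]
  intro η₀ ε hε
  set b : ℝ := α * c / 2 with hb
  have hb0 : 0 < b := by positivity
  have hS : {i | b ≤ |η₀ i|}.Finite := finite_large_coords η₀ hb0
  set Sf : Finset Λ := hS.toFinset with hSf
  set K : ℝ := ∑ i ∈ Sf, (2 / κ i) ^ 2 with hK
  have hK0 : 0 ≤ K := Finset.sum_nonneg fun i _ => sq_nonneg _
  have hsq : Real.sqrt (K + 1) > 0 := Real.sqrt_pos.2 (by linarith)
  set δ : ℝ := min b (ε / (2 * Real.sqrt (K + 1))) with hδ
  have hδ0 : 0 < δ := lt_min hb0 (by positivity)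
  refine ⟨δ, hδ0, ?_⟩
  intro η hdist
  -- coordinates of the difference
  have hcoord : ∀ i, |η i - η₀ i| ≤ δ := by
    intro i
    have h1 : ‖(η - η₀) i‖ ≤ ‖η - η₀‖ := lp.norm_apply_le_norm two_ne_zero (η - η₀) i
    have h2 : (η - η₀) i = η i - η₀ i := by
      simp [lp.coeFn_sub]
    rw [h2, Real.norm_eq_abs] at h1
    rw [dist_eq_norm] at hdist
    exact h1.trans hdist.le
  -- off Sf both vanish
  have hzero : ∀ i, i ∉ Sf → g η i - g η₀ i = 0 := by
    intro i hi
    have hi' : |η₀ i| < b := by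
      by_contra h
      exact hi (hS.mem_toFinset.2 (le_of_not_gt h))
    have hδb : δ ≤ b := min_le_left _ _
    have h1 : |η₀ i| ≤ α * c := by nlinarith
    have h2 : |η i| ≤ α * c := by
      have := hcoord i
      have := abs_sub_abs_le_abs_sub (η i) (η₀ i)
      nlinarith
    rw [hvanish η i h2, hvanish η₀ i h1, sub_zero]
  -- on Sf, Lipschitz bound
  have hbound : ∀ i, |g η i - g η₀ i| ≤ 2 * δ / κ i := by
    intro i
    have hκi := hκ i
    have ht : (0:ℝ) ≤ α * d i := by nlinarith [hd i]
    have h1 : |g η i - g η₀ i| = |soft (η i) (α * d i) - soft (η₀ i) (α * d i)| / κ i := by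
      rw [hg]
      rw [div_sub_div_same, abs_div, abs_of_pos hκi]
    rw [h1]
    exact (div_le_div_iff_of_pos_right hκi).2
      ((soft_lipschitz _ _ _ ht).trans (by nlinarith [hcoord i]))
  -- norm bound
  have hTsub : ∀ i, ((T η - T η₀ : lp (fun _ : Λ => ℝ) 2) : ∀ _, ℝ) i = g η i - g η₀ i := by
    intro i; simp [lp.coeFn_sub, hT]; rfl
  rw [dist_eq_norm]
  have hnorm : ‖T η - T η₀‖ ≤ ε / 2 := by
    apply lp.norm_le_of_forall_sum_le (by norm_num) (by positivity)
    intro s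
    have hsum : ∀ i ∈ s, ‖(T η - T η₀ : lp (fun _ : Λ => ℝ) 2) i‖ ^ (2:ℝ≥0∞).toReal
        ≤ if i ∈ Sf then (2 * δ / κ i) ^ 2 else 0 := by
      intro i _
      rw [two_toReal_pow, hTsub i, Real.norm_eq_abs]
      by_cases hi : i ∈ Sf
      · rw [if_pos hi]
        exact pow_le_pow_left₀ (abs_nonneg _) (hbound i) 2
      · rw [if_neg hi, hzero i hi, abs_zero]
        norm_num
    calc ∑ i ∈ s, ‖(T η - T η₀ : lp (fun _ : Λ => ℝ) 2) i‖ ^ (2:ℝ≥0∞).toReal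
        ≤ ∑ i ∈ s, if i ∈ Sf then (2 * δ / κ i) ^ 2 else 0 :=
          Finset.sum_le_sum hsum
      _ ≤ ∑ i ∈ Sf, (2 * δ / κ i) ^ 2 := by
          rw [Finset.sum_ite_mem]
          exact Finset.sum_le_sum_of_subset_of_nonneg (Finset.inter_subset_right)
            (fun i _ _ => sq_nonneg _)
      _ = δ ^ 2 * K := by
          rw [hK, Finset.mul_sum]
          exact Finset.sum_congr rfl fun i _ => by ring
      _ ≤ (ε / 2) ^ (2:ℝ≥0∞).toReal := by
          rw [two_toReal_pow]
          have hδ2 : δ ≤ ε / (2 * Real.sqrt (K + 1)) := min_le_right _ _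
          have hs2 : Real.sqrt (K + 1) ^ 2 = K + 1 := Real.sq_sqrt (by linarith)
          have hδ0' : (0:ℝ) ≤ δ := hδ0.le
          have h3 : δ ^ 2 * (K + 1) ≤ (ε / 2) ^ 2 := by
            have h4 : δ * (2 * Real.sqrt (K + 1)) ≤ ε := by
              rw [← le_div_iff₀ (by positivity)]
              exact hδ2
            have h5 : (0:ℝ) ≤ (ε - 2 * δ * Real.sqrt (K + 1)) * (ε + 2 * δ * Real.sqrt (K + 1)) :=
              mul_nonneg (by linarith) (by positivity)
            nlinarith [hs2, h5]
          nlinarith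
  linarith
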